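/- Let (u, v, w) be the standard basis of ℚ³, let ε : ℚ³ → ℚ³ be the linear automorphism with ε(u) = v, ε(v) = −u − v, ε(w) = w, and let σ = Cone(5u+v−5w, −5u−5v+14w, 4u−v). Then σ ∩ ε(σ) = {0}; equivalently, Cone(5u+v−5w, −5u−5v+14w, 4u−v) ∩ Cone(−u+4v−5w, 5u+14w, u+5v) = {0}. -/

import Mathlib

open Pointwise

/-- The cone generated by a finite family of vectors: all nonnegative
rational linear combinations of the `g i`. -/
def coneGen {V : Type*} [AddCommGroup V] [Module ℚ V] {n : ℕ} (g : Fin n → V) : Set V :=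
  {x | ∃ c : Fin n → ℚ, (∀ i, 0 ≤ c i) ∧ x = ∑ i, c i • g i}

/-- A set is a cone if it is the cone generated by some finite family of vectors. -/
def IsCone {V : Type*} [AddCommGroup V] [Module ℚ V] (C : Set V) : Prop :=
  ∃ (n : ℕ) (g : Fin n → V), C = coneGen g

/-- `F` is a face of the cone `C` if `F = C ∩ l⁻¹(0)` for some linear form `l`
nonnegative on `C`. -/
def IsFaceOf {V : Type*} [AddCommGroup V] [Module ℚ V] (F C : Set V) : Prop :=
  ∃ l : V →ₗ[ℚ] ℚ, (∀ x ∈ C, 0 ≤ l x) ∧ F = C ∩ {x | l x = 0}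

/-- A fan: a finite collection of strictly convex cones, closed under taking faces,
such that the intersection of any two of its cones is a face of each. -/
def IsFan {V : Type*} [AddCommGroup V] [Module ℚ V] (S : Set (Set V)) : Prop :=
  S.Finite ∧
  (∀ C ∈ S, IsCone C ∧ C ∩ (-C) = ({0} : Set V)) ∧
  (∀ C ∈ S, ∀ F : Set V, IsFaceOf F C → F ∈ S) ∧
  (∀ C ∈ S, ∀ C' ∈ S, IsFaceOf (C ∩ C') C ∧ IsFaceOf (C ∩ C') C')

/-- A cone of the collection `S` is maximal if it is not strictly contained in
another cone of `S`. -/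
def IsMaximalIn {V : Type*} [AddCommGroup V] [Module ℚ V] (S : Set (Set V)) (C : Set V) : Prop :=
  C ∈ S ∧ ∀ C' ∈ S, C ⊆ C' → C' = C

/-- A fan is quasi-projective if there is a family of linear forms indexed by its
maximal cones which agree on pairwise intersections and satisfy the strict
inequality condition. -/
def IsQuasiProjectiveFan {V : Type*} [AddCommGroup V] [Module ℚ V] (S : Set (Set V)) : Prop :=
  ∃ l : Set V → (V →ₗ[ℚ] ℚ),
    (∀ C, IsMaximalIn S C → ∀ C', IsMaximalIn S C' → ∀ x ∈ C ∩ C', l C x = l C' x) ∧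
    (∀ C, IsMaximalIn S C → ∀ C', IsMaximalIn S C' → C ≠ C' →
      ∀ x ∈ C, x ∉ C' → l C' x < l C x)

/-- The generators `5u+v−5w`, `−5u−5v+14w`, `4u−v` of the cone `σ`. -/
def genS : Fin 3 → (Fin 3 → ℚ) := ![![5, 1, -5], ![-5, -5, 14], ![4, -1, 0]]

/-- The cone `σ = Cone(5u+v−5w, −5u−5v+14w, 4u−v)` in `ℚ³`. -/
def coneSigma : Set (Fin 3 → ℚ) := coneGen genS

/-- The matrix of `ε` in the standard basis `(u, v, w)`:
`ε(u) = v`, `ε(v) = −u−v`, `ε(w) = w`. -/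
def epsMat : Matrix (Fin 3) (Fin 3) ℚ := ![![0, -1, 0], ![1, -1, 0], ![0, 0, 1]]

/-- The linear automorphism `ε : ℚ³ → ℚ³`. -/
def eps : (Fin 3 → ℚ) →ₗ[ℚ] (Fin 3 → ℚ) := Matrix.toLin' epsMat


lemma key : coneGen genS ∩ coneGen ![![-1, 4, -5], ![5, 0, 14], ![1, 5, 0]] =
    ({0} : Set (Fin 3 → ℚ)) := by
  ext x
  constructor
  · rintro ⟨⟨c, hc, hx⟩, ⟨d, hd, hy⟩⟩
    have hc0 := hc 0; have hc1 := hc 1; have hc2 := hc 2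
    have hd0 := hd 0; have hd1 := hd 1; have hd2 := hd 2
    have e1 : x 1 = c 0 * 1 + c 1 * (-5) + c 2 * (-1) := by
      rw [hx]; simp [genS, Fin.sum_univ_three]
    have e2 : x 2 = c 0 * (-5) + c 1 * 14 + c 2 * 0 := by
      rw [hx]; simp [genS, Fin.sum_univ_three]
    have f1 : x 1 = d 0 * 4 + d 1 * 0 + d 2 * 5 := by
      rw [hy]; simp [Fin.sum_univ_three]
    have f2 : x 2 = d 0 * (-5) + d 1 * 14 + d 2 * 0 := by
      rw [hy]; simp [Fin.sum_univ_three]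
    have hzero : 2 * c 0 + c 1 + 3 * c 2 = 0 := by nlinarith [e1, e2, f1, f2]
    have h0 : c 0 = 0 := by linarith
    have h1 : c 1 = 0 := by linarith
    have h2 : c 2 = 0 := by linarith
    have : x = 0 := by
      rw [hx, Fin.sum_univ_three, h0, h1, h2]; simp
    simpa using this
  · rintro rfl
    refine ⟨⟨0, fun i => le_refl 0, by simp⟩, ⟨0, fun i => le_refl 0, by simp⟩⟩

lemma eps_image : ⇑eps '' coneGen genS =
    coneGen ![![-1, 4, -5], ![5, 0, 14], ![1, 5, 0]] := by
  have heps : ∀ i, eps (genS i) = ![![(-1 : ℚ), 4, -5], ![5, 0, 14], ![1, 5, 0]] i := by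
    intro i
    fin_cases i <;>
      · rw [eps, Matrix.toLin'_apply]; simp only [epsMat, genS]
        funext j
        fin_cases j <;> simp [Matrix.mulVec, dotProduct, Fin.sum_univ_three] <;> norm_num
  ext x
  constructor
  · rintro ⟨y, ⟨c, hc, rfl⟩, rfl⟩
    refine ⟨c, hc, ?_⟩
    simp only [map_sum, map_smul, heps]
  · rintro ⟨c, hc, rfl⟩
    refine ⟨∑ i, c i • genS i, ⟨c, hc, rfl⟩, ?_⟩
    simp only [map_sum, map_smul, heps]

/-- `σ ∩ ε(σ) = {0}`; equivalently,
`Cone(5u+v−5w, −5u−5v+14w, 4u−v) ∩ Cone(−u+4v−5w, 5u+14w, u+5v) = {0}`. -/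
theorem sigma_inter_eps_sigma_eq_zero :
    coneSigma ∩ (⇑eps '' coneSigma) = ({0} : Set (Fin 3 → ℚ)) ∧
    coneGen genS ∩ coneGen ![![-1, 4, -5], ![5, 0, 14], ![1, 5, 0]] =
      ({0} : Set (Fin 3 → ℚ)) := by
  have h2 := key
  refine ⟨?_, h2⟩
  rw [coneSigma, eps_image]
  exact h2
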